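/- Let X be a real random variable with |X| ≤ R almost surely and E[X] = 0. Then there exists γ_0 > 0 (depending only on R) such that for all 0 < γ ≤ γ_0 and all n ≥ 1, E[exp(γ n (S_n/n)²)] ≤ 2, where S_n is the sum of n i.i.d. copies of X. Equivalently, log E[exp(γ n (S_n/n)²)] is bounded uniformly in n for γ small enough. -/

import Mathlib

open MeasureTheory ProbabilityTheory Finset

/-- integrability of `exp (t * Y)` for an a.e. bounded measurable `Y`. -/
lemma aux_int_exp {Ω : Type*} [MeasurableSpace Ω] (μ : Measure Ω) [IsProbabilityMeasure μ]
    {Y : Ω → ℝ} (hY : Measurable Y) {K : ℝ} (hb : ∀ᵐ ω ∂μ, |Y ω| ≤ K) (t : ℝ) :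
    Integrable (fun ω => Real.exp (t * Y ω)) μ := by
  refine Integrable.mono' (integrable_const (Real.exp (|t| * K)))
    ((hY.const_mul t).exp.aestronglyMeasurable) ?_
  filter_upwards [hb] with ω h
  rw [Real.norm_eq_abs, Real.abs_exp]
  refine Real.exp_le_exp.2 (le_trans (le_abs_self _) ?_)
  rw [abs_mul]
  exact mul_le_mul_of_nonneg_left h (abs_nonneg t)

/-- integrability of a.e. bounded measurable function. -/
lemma aux_int_bdd {Ω : Type*} [MeasurableSpace Ω] (μ : Measure Ω) [IsProbabilityMeasure μ]
    {Y : Ω → ℝ} (hY : Measurable Y) {K : ℝ} (hb : ∀ᵐ ω ∂μ, |Y ω| ≤ K) :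
    Integrable Y μ := by
  refine Integrable.mono' (integrable_const K) hY.aestronglyMeasurable ?_
  filter_upwards [hb] with ω h
  rwa [Real.norm_eq_abs]

/-- Hoeffding's lemma. -/
lemma aux_hoeffding {Ω : Type*} [MeasurableSpace Ω] (μ : Measure Ω) [IsProbabilityMeasure μ]
    {R : ℝ} (hR : 0 < R) {Y : Ω → ℝ} (hY : Measurable Y)
    (hb : ∀ᵐ ω ∂μ, |Y ω| ≤ R) (hm : ∫ ω, Y ω ∂μ = 0) (t : ℝ) :
    ∫ ω, Real.exp (t * Y ω) ∂μ ≤ Real.exp (t ^ 2 * R ^ 2 / 2) := by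
  have hYint : Integrable Y μ := aux_int_bdd μ hY hb
  have hkey : ∀ x : ℝ, |x| ≤ R →
      Real.exp (t * x) ≤ Real.cosh (t * R) + (x / R) * Real.sinh (t * R) := by
    intro x hx
    obtain ⟨hx1, hx2⟩ := abs_le.mp hx
    have ha : (0:ℝ) ≤ (R - x) / (2 * R) := by
      apply div_nonneg <;> linarith
    have hb' : (0:ℝ) ≤ (R + x) / (2 * R) := by
      apply div_nonneg <;> linarith
    have hab : (R - x) / (2 * R) + (R + x) / (2 * R) = 1 := by
      field_simp; ring
    have hcvx := convexOn_exp.2 (Set.mem_univ (t * (-R))) (Set.mem_univ (t * R)) ha hb' hab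
    simp only [smul_eq_mul] at hcvx
    have h1 : (R - x) / (2 * R) * (t * (-R)) + (R + x) / (2 * R) * (t * R) = t * x := by
      field_simp; ring
    have h2 : (R - x) / (2 * R) * Real.exp (t * (-R)) + (R + x) / (2 * R) * Real.exp (t * R)
        = Real.cosh (t * R) + (x / R) * Real.sinh (t * R) := by
      rw [Real.cosh_eq, Real.sinh_eq, mul_neg, Real.exp_neg]
      field_simp
      ring
    rw [h1, h2] at hcvx
    exact hcvx
  have hint1 : Integrable (fun ω => Real.exp (t * Y ω)) μ := aux_int_exp μ hY hb t
  have hint2 : Integrable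
      (fun ω => Real.cosh (t * R) + (Y ω / R) * Real.sinh (t * R)) μ :=
    (integrable_const _).add (((hYint.div_const R).mul_const _))
  have hle : ∫ ω, Real.exp (t * Y ω) ∂μ
      ≤ ∫ ω, (Real.cosh (t * R) + (Y ω / R) * Real.sinh (t * R)) ∂μ := by
    refine integral_mono_ae hint1 hint2 ?_
    filter_upwards [hb] with ω h
    exact hkey _ h
  have heval : ∫ ω, (Real.cosh (t * R) + (Y ω / R) * Real.sinh (t * R)) ∂μ
      = Real.cosh (t * R) := by
    rw [integral_add (integrable_const _) ((hYint.div_const R).mul_const _)]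
    rw [integral_const, probReal_univ, one_smul]
    have : ∫ ω, Y ω / R * Real.sinh (t * R) ∂μ
        = (∫ ω, Y ω ∂μ) / R * Real.sinh (t * R) := by
      rw [integral_mul_const, integral_div]
    rw [this, hm]
    simp
  have hcosh : Real.cosh (t * R) ≤ Real.exp (t ^ 2 * R ^ 2 / 2) := by
    have := Real.cosh_le_exp_half_sq (t * R)
    rwa [mul_pow] at this
  calc ∫ ω, Real.exp (t * Y ω) ∂μ
      ≤ ∫ ω, (Real.cosh (t * R) + (Y ω / R) * Real.sinh (t * R)) ∂μ := hle
    _ = Real.cosh (t * R) := heval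
    _ ≤ Real.exp (t ^ 2 * R ^ 2 / 2) := hcosh

/-- the Gaussian linearization identity. -/
lemma aux_gauss (a : ℝ) :
    ∫ z : ℝ, Real.exp (a * z - z ^ 2 / 2) = Real.sqrt (2 * Real.pi) * Real.exp (a ^ 2 / 2) := by
  have h : ∀ z : ℝ, a * z - z ^ 2 / 2 = a ^ 2 / 2 + (-(1/2) * (z - a) ^ 2) := by
    intro z; ring
  simp_rw [h, Real.exp_add]
  rw [MeasureTheory.integral_const_mul]
  have htr : ∫ z : ℝ, Real.exp (-(1/2) * (z - a) ^ 2)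
      = ∫ z : ℝ, Real.exp (-(1/2) * z ^ 2) := by
    exact integral_sub_right_eq_self (fun z => Real.exp (-(1/2) * z ^ 2)) a
  rw [htr, integral_gaussian]
  rw [show Real.pi / (1/2) = 2 * Real.pi by ring]
  ring

theorem uniform_exp_moment_of_squared_mean
    {Ω : Type*} [MeasurableSpace Ω] (μ : Measure Ω) [IsProbabilityMeasure μ]
    (R : ℝ) (hR : 0 < R)
    (X : ℕ → Ω → ℝ)
    (hmeas : ∀ i, Measurable (X i))
    (hindep : iIndepFun X μ)
    (hident : ∀ i, μ.map (X i) = μ.map (X 0))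
    (hbdd : ∀ i, ∀ᵐ ω ∂μ, |X i ω| ≤ R)
    (hmean : ∀ i, ∫ ω, X i ω ∂μ = 0) :
    ∃ γ₀ > 0, ∀ γ : ℝ, 0 < γ → γ ≤ γ₀ → ∀ n : ℕ, 1 ≤ n →
      ∫ ω, Real.exp (γ * n * ((∑ i ∈ range n, X i ω) / n) ^ 2) ∂μ ≤ 2 := by
  refine ⟨1 / (8 * R ^ 2), by positivity, fun γ hγ hγ0 n hn => ?_⟩
  -- basic setup
  set S : Ω → ℝ := fun ω => ∑ i ∈ range n, X i ω with hS_def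
  have hS : Measurable S := Finset.measurable_sum _ (fun i _ => hmeas i)
  have hn0 : (0:ℝ) < n := by exact_mod_cast hn
  have hbRsq : γ * R ^ 2 ≤ 1 / 8 := by
    have := mul_le_mul_of_nonneg_right hγ0 (sq_nonneg R)
    calc γ * R ^ 2 ≤ 1 / (8 * R ^ 2) * R ^ 2 := this
      _ = 1 / 8 := by field_simp; try ring
  have hbpos : 0 < γ * R ^ 2 := by positivity
  set b : ℝ := 1 / 2 - γ * R ^ 2 with hb_def
  have hbpos' : 0 < b := by rw [hb_def]; linarith
  set c : ℝ := Real.sqrt (2 * γ / n) with hc_def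
  have hc2 : c ^ 2 = 2 * γ / n := Real.sq_sqrt (by positivity)
  have hnc : (n:ℝ) * c ^ 2 = 2 * γ := by
    rw [hc2]; field_simp
  -- a.e. bound on S
  have hSbdd : ∀ᵐ ω ∂μ, |S ω| ≤ n * R := by
    have hall : ∀ᵐ ω ∂μ, ∀ i, |X i ω| ≤ R := ae_all_iff.2 hbdd
    filter_upwards [hall] with ω h
    calc |S ω| ≤ ∑ i ∈ range n, |X i ω| := Finset.abs_sum_le_sum_abs _ _
      _ ≤ ∑ _i ∈ range n, R := Finset.sum_le_sum (fun i _ => h i)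
      _ = n * R := by rw [Finset.sum_const, card_range, nsmul_eq_mul]
  -- mgf bound for the sum
  have hSmgf : ∀ t : ℝ, ∫ ω, Real.exp (t * S ω) ∂μ ≤ Real.exp (n * (t ^ 2 * R ^ 2 / 2)) := by
    intro t
    have h1 : ∫ ω, Real.exp (t * S ω) ∂μ = mgf (∑ i ∈ range n, X i) μ t := by
      simp only [mgf, hS_def, Finset.sum_apply]
    rw [h1, hindep.mgf_sum hmeas (range n)]
    calc ∏ i ∈ range n, mgf (X i) μ t
        ≤ ∏ _i ∈ range n, Real.exp (t ^ 2 * R ^ 2 / 2) :=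
          Finset.prod_le_prod (fun i _ => mgf_nonneg)
            (fun i _ => aux_hoeffding μ hR (hmeas i) (hbdd i) (hmean i) t)
      _ = Real.exp (t ^ 2 * R ^ 2 / 2) ^ n := by rw [Finset.prod_const, card_range]
      _ = Real.exp (n * (t ^ 2 * R ^ 2 / 2)) := (Real.exp_nat_mul _ n).symm
  -- the kernel function
  set f : ℝ → Ω → ℝ := fun z ω => Real.exp (c * S ω * z - z ^ 2 / 2) with hf_def
  have hfsplit : ∀ z ω, f z ω = Real.exp ((c * z) * S ω) * Real.exp (-(z ^ 2 / 2)) := by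
    intro z ω
    show Real.exp (c * S ω * z - z ^ 2 / 2) = _
    rw [← Real.exp_add]
    congr 1; ring
  have hfmeas : AEStronglyMeasurable (Function.uncurry f)
      ((volume : Measure ℝ).prod μ) := by
    apply Measurable.aestronglyMeasurable
    apply Measurable.exp
    exact (((measurable_const.mul (hS.comp measurable_snd)).mul measurable_fst).sub
      ((measurable_fst.pow_const 2).div_const 2))
  -- pointwise integral bound in z
  have hkey : ∀ z : ℝ, ∫ ω, f z ω ∂μ ≤ Real.exp (-b * z ^ 2) := by
    intro z
    have h1 : ∫ ω, f z ω ∂μ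
        = (∫ ω, Real.exp ((c * z) * S ω) ∂μ) * Real.exp (-(z ^ 2 / 2)) := by
      simp_rw [hfsplit]
      rw [integral_mul_const]
    rw [h1]
    have h2 := hSmgf (c * z)
    have h3 : (n:ℝ) * ((c * z) ^ 2 * R ^ 2 / 2) = γ * R ^ 2 * z ^ 2 := by
      have : (n:ℝ) * ((c * z) ^ 2 * R ^ 2 / 2) = ((n:ℝ) * c ^ 2) * (z ^ 2 * R ^ 2 / 2) := by
        ring
      rw [this, hnc]; ring
    calc (∫ ω, Real.exp ((c * z) * S ω) ∂μ) * Real.exp (-(z ^ 2 / 2))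
        ≤ Real.exp ((n:ℝ) * ((c * z) ^ 2 * R ^ 2 / 2)) * Real.exp (-(z ^ 2 / 2)) := by
          apply mul_le_mul_of_nonneg_right h2 (Real.exp_nonneg _)
      _ = Real.exp (-b * z ^ 2) := by
          rw [← Real.exp_add, h3, hb_def]; congr 1; ring
  -- integrability of f on the product
  have hf_int : Integrable (Function.uncurry f) ((volume : Measure ℝ).prod μ) := by
    rw [integrable_prod_iff hfmeas]
    constructor
    · refine Filter.Eventually.of_forall (fun z => ?_)
      refine ((aux_int_exp μ hS hSbdd (c * z)).mul_const (Real.exp (-(z ^ 2 / 2)))).congr ?_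
      refine Filter.Eventually.of_forall (fun ω => ?_)
      exact (hfsplit z ω).symm
    · have hnorm : ∀ z, (∫ ω, ‖Function.uncurry f (z, ω)‖ ∂μ) = ∫ ω, f z ω ∂μ := by
        intro z
        apply integral_congr_ae
        refine Filter.Eventually.of_forall (fun ω => ?_)
        simp only [Function.uncurry, Real.norm_eq_abs, hf_def, Real.abs_exp]
      refine Integrable.mono' (integrable_exp_neg_mul_sq hbpos')
        (hfmeas.norm.integral_prod_right') ?_
      refine Filter.Eventually.of_forall (fun z => ?_)
      rw [Real.norm_eq_abs]
      have h0 : 0 ≤ ∫ ω, ‖Function.uncurry f (z, ω)‖ ∂μ :=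
        integral_nonneg (fun ω => norm_nonneg _)
      rw [abs_of_nonneg h0, hnorm z]
      exact hkey z
  -- the per-ω Gaussian identity and chaining
  have hid : ∀ ω : Ω, Real.exp (γ * n * (S ω / n) ^ 2)
      = (Real.sqrt (2 * Real.pi))⁻¹ * ∫ z : ℝ, f z ω := by
    intro ω
    have harg : γ * n * (S ω / n) ^ 2 = (c * S ω) ^ 2 / 2 := by
      rw [mul_pow, hc2]
      field_simp
      try ring
    have hA := aux_gauss (c * S ω)
    have hsqrt : (0:ℝ) < Real.sqrt (2 * Real.pi) :=
      Real.sqrt_pos.2 (by positivity)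
    have : ∫ z : ℝ, f z ω = Real.sqrt (2 * Real.pi) * Real.exp ((c * S ω) ^ 2 / 2) := by
      rw [← hA]
    rw [harg, this]
    field_simp
  calc ∫ ω, Real.exp (γ * n * ((∑ i ∈ range n, X i ω) / n) ^ 2) ∂μ
      = ∫ ω, (Real.sqrt (2 * Real.pi))⁻¹ * ∫ z : ℝ, f z ω ∂(volume) ∂μ := by
        apply integral_congr_ae
        exact Filter.Eventually.of_forall (fun ω => hid ω)
    _ = (Real.sqrt (2 * Real.pi))⁻¹ * ∫ ω, (∫ z : ℝ, f z ω ∂(volume)) ∂μ :=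
        MeasureTheory.integral_const_mul _ _
    _ = (Real.sqrt (2 * Real.pi))⁻¹ * ∫ z : ℝ, (∫ ω, f z ω ∂μ) ∂(volume) := by
        rw [integral_integral_swap hf_int]
    _ ≤ (Real.sqrt (2 * Real.pi))⁻¹ * ∫ z : ℝ, Real.exp (-b * z ^ 2) ∂(volume) := by
        apply mul_le_mul_of_nonneg_left _ (by positivity)
        apply integral_mono hf_int.integral_prod_left (integrable_exp_neg_mul_sq hbpos')
        exact hkey
    _ = (Real.sqrt (2 * Real.pi))⁻¹ * Real.sqrt (Real.pi / b) := by
        rw [integral_gaussian]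
    _ ≤ 2 := by
        rw [← Real.sqrt_inv, ← Real.sqrt_mul (by positivity)]
        have h1 : (2 * Real.pi)⁻¹ * (Real.pi / b) ≤ 4 := by
          have hb38 : (3:ℝ)/8 ≤ b := by rw [hb_def]; linarith
          have : (2 * Real.pi)⁻¹ * (Real.pi / b) = (2 * b)⁻¹ := by
            field_simp
          rw [this]
          have h2b : (1:ℝ)/4 ≤ 2 * b := by linarith
          calc (2*b)⁻¹ ≤ ((1:ℝ)/4)⁻¹ := by
                apply inv_anti₀ (by norm_num) h2b
            _ = 4 := by norm_num
        calc Real.sqrt ((2 * Real.pi)⁻¹ * (Real.pi / b)) ≤ Real.sqrt 4 :=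
              Real.sqrt_le_sqrt h1
          _ = 2 := by
              rw [show (4:ℝ) = 2 ^ 2 by norm_num, Real.sqrt_sq (by norm_num)]
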